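/- Let T be a cyclic group of order q²−1 (q an odd prime power). Suppose Λ, Φ, Λ', Φ' are indecomposable characters of T satisfying Λ'Φ'^q = ΛΦ^q and Λ'Φ' = Λ^qΦ^q. Then Φ'^qΛ^{-1} is decomposable, and Λ'Φ^{-q} = (Φ'^qΛ^{-1})^{-1}. -/
import Mathlib

lemma stmt17_aux {G : Type*} [CommGroup G] (q : ℕ) (hq : 1 ≤ q) (a b a' b' : G)
    (ha : a ^ (q ^ 2 - 1) = 1)
    (e1 : a' * b' ^ q = a * b ^ q) (e2 : a' * b' = a ^ q * b ^ q) :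
    (b' ^ q * a⁻¹) ^ (q - 1) = 1 ∧ a' * (b ^ q)⁻¹ = (b' ^ q * a⁻¹)⁻¹ := by
  have ha' : a' = a * b ^ q * (b' ^ q)⁻¹ := by rw [← e1]; group
  have h : a' * b' ^ q * (b'⁻¹ * a'⁻¹) = a * b ^ q * ((b ^ q)⁻¹ * (a ^ q)⁻¹) := by
    have := congrArg₂ (fun x y : G => x * y⁻¹) e1 e2
    simpa [mul_inv_rev, mul_assoc] using this
  have h2 : b' ^ q * b'⁻¹ = a * (a ^ q)⁻¹ := by
    calc b' ^ q * b'⁻¹ = b' ^ q * b'⁻¹ * (a' * a'⁻¹) := by simp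
      _ = a' * b' ^ q * (b'⁻¹ * a'⁻¹) := by ac_rfl
      _ = a * b ^ q * ((b ^ q)⁻¹ * (a ^ q)⁻¹) := h
      _ = a * (a ^ q)⁻¹ * (b ^ q * (b ^ q)⁻¹) := by ac_rfl
      _ = a * (a ^ q)⁻¹ := by simp
  have key : b' ^ q = b' * a * (a ^ q)⁻¹ := by
    calc b' ^ q = b' ^ q * b'⁻¹ * b' := by simp
      _ = a * (a ^ q)⁻¹ * b' := by rw [h2]
      _ = b' * a * (a ^ q)⁻¹ := by ac_rfl
  have hq2 : q ^ 2 = 1 + (q ^ 2 - 1) := by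
    have h1 : 1 ≤ q ^ 2 := Nat.one_le_pow _ _ hq
    omega
  have hx : (b' ^ q * a⁻¹) ^ q = b' ^ q * a⁻¹ := by
    calc (b' ^ q * a⁻¹) ^ q = (b' ^ q) ^ q * (a ^ q)⁻¹ := by
          rw [mul_pow, inv_pow]
      _ = (b' * a * (a ^ q)⁻¹) ^ q * (a ^ q)⁻¹ := by rw [← key]
      _ = b' ^ q * a ^ q * ((a ^ q) ^ q)⁻¹ * (a ^ q)⁻¹ := by
          rw [mul_pow, mul_pow, inv_pow]
      _ = b' ^ q * (a ^ (q * q))⁻¹ * (a ^ q * (a ^ q)⁻¹) := by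
          rw [← pow_mul]; ac_rfl
      _ = b' ^ q * (a ^ (q ^ 2))⁻¹ := by rw [← pow_two]; simp
      _ = b' ^ q * a⁻¹ := by
          rw [hq2, pow_add, pow_one, ha, mul_one]
  constructor
  · have h1 : (b' ^ q * a⁻¹) ^ (q - 1) * (b' ^ q * a⁻¹) = 1 * (b' ^ q * a⁻¹) := by
      rw [one_mul, ← pow_succ, Nat.sub_add_cancel hq, hx]
    exact mul_right_cancel h1
  · rw [ha', mul_inv_rev, inv_inv]
    calc a * b ^ q * (b' ^ q)⁻¹ * (b ^ q)⁻¹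
        = a * (b' ^ q)⁻¹ * (b ^ q * (b ^ q)⁻¹) := by ac_rfl
      _ = a * (b' ^ q)⁻¹ := by simp

/-- If `Λ, Φ, Λ', Φ'` are indecomposable characters of a cyclic group of order `q² - 1` with
`Λ'Φ'^q = ΛΦ^q` and `Λ'Φ' = Λ^qΦ^q`, then `Φ'^qΛ⁻¹` is decomposable and
`Λ'Φ^{-q} = (Φ'^qΛ⁻¹)⁻¹`. -/
theorem stmt17 (q : ℕ) (hq : IsPrimePow q) (hodd : Odd q)
    (T : Type) [CommGroup T] [IsCyclic T] (hT : Nat.card T = q ^ 2 - 1)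
    (Λ Φ Λ' Φ' : T →* ℂˣ)
    (hΛ : Λ ^ (q - 1) ≠ 1) (hΦ : Φ ^ (q - 1) ≠ 1)
    (hΛ' : Λ' ^ (q - 1) ≠ 1) (hΦ' : Φ' ^ (q - 1) ≠ 1)
    (e1 : Λ' * Φ' ^ q = Λ * Φ ^ q) (e2 : Λ' * Φ' = Λ ^ q * Φ ^ q) :
    (Φ' ^ q * Λ⁻¹) ^ (q - 1) = 1 ∧ Λ' * (Φ ^ q)⁻¹ = (Φ' ^ q * Λ⁻¹)⁻¹ := by
  have ha : Λ ^ (q ^ 2 - 1) = 1 := by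
    ext t
    have ht : (t : T) ^ (q ^ 2 - 1) = 1 := by rw [← hT]; exact pow_card_eq_one'
    simp [← map_pow, ht]
  exact stmt17_aux q hq.one_lt.le Λ Φ Λ' Φ' ha e1 e2
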